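/- For every index j, the partial derivative of the Direct Rank loss L with respect to s_j equals (exp(q j)·(1 − (q j)²) / (∑_i τr i · exp(q i))²) · (τc j · ∑_i τr i · exp(q i) − τr j · ∑_i τc i · exp(q i)); formally, the function t ↦ L(Function.update s j t) has this value as its derivative at s j. -/

import Mathlib

lemma tanh_hasDerivAt (x : ℝ) :
    HasDerivAt Real.tanh (1 - Real.tanh x ^ 2) x := by
  have hc : Real.cosh x ≠ 0 := (Real.cosh_pos (x := x)).ne'
  have h := (Real.hasDerivAt_sinh x).fun_div (Real.hasDerivAt_cosh x) hc
  have heq : (fun y => Real.sinh y / Real.cosh y) = Real.tanh := by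
    funext y; rw [Real.tanh_eq_sinh_div_cosh]
  rw [heq] at h
  refine h.congr_deriv (Eq.symm ?_)
  rw [Real.tanh_eq_sinh_div_cosh, div_pow]
  field_simp

lemma sum_hasDerivAt (N : ℕ) (s : Fin N → ℝ) (τ : Fin N → ℝ) (j : Fin N) :
    HasDerivAt (fun t : ℝ => ∑ i, τ i * Real.exp (Real.tanh (Function.update s j t i)))
      (τ j * (Real.exp (Real.tanh (s j)) * (1 - Real.tanh (s j) ^ 2))) (s j) := by
  have h : ∀ i ∈ Finset.univ, HasDerivAt
      (fun t : ℝ => τ i * Real.exp (Real.tanh (Function.update s j t i)))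
      (if i = j then τ j * (Real.exp (Real.tanh (s j)) * (1 - Real.tanh (s j) ^ 2)) else 0)
      (s j) := by
    intro i _
    by_cases hij : i = j
    · subst hij
      simp only [if_pos rfl]
      have ht : HasDerivAt (fun t : ℝ => Real.tanh t) (1 - Real.tanh (s i) ^ 2) (s i) :=
        tanh_hasDerivAt (s i)
      have he := (Real.hasDerivAt_exp (Real.tanh (s i))).comp (s i) ht
      have := he.const_mul (τ i)
      simpa [Function.update_self, Function.comp_def, mul_comm, mul_assoc, mul_left_comm]
        using this
    · simp only [if_neg hij, Function.update_of_ne hij]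
      exact hasDerivAt_const _ _
  have := HasDerivAt.fun_sum h
  simpa using this

theorem direct_rank_partial_deriv
    (N : ℕ) (hN : 0 < N) (s τr τc : Fin N → ℝ)
    (hr : ∀ i, 0 < τr i) (hc : ∀ i, 0 < τc i)
    (L : (Fin N → ℝ) → ℝ)
    (hL : L = fun u : Fin N → ℝ =>
      (∑ i, τc i * Real.exp (Real.tanh (u i))) /
        (∑ i, τr i * Real.exp (Real.tanh (u i))))
    (j : Fin N) :
    HasDerivAt (fun t : ℝ => L (Function.update s j t))
      ((Real.exp (Real.tanh (s j)) * (1 - (Real.tanh (s j)) ^ 2)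
          / (∑ i, τr i * Real.exp (Real.tanh (s i))) ^ 2)
        * (τc j * ∑ i, τr i * Real.exp (Real.tanh (s i))
            - τr j * ∑ i, τc i * Real.exp (Real.tanh (s i))))
      (s j) := by
  subst hL
  have hGpos : 0 < ∑ i, τr i * Real.exp (Real.tanh (s i)) := by
    apply Finset.sum_pos
    · intro i _
      exact mul_pos (hr i) (Real.exp_pos _)
    · exact Finset.univ_nonempty_iff.mpr ⟨⟨0, hN⟩⟩
  have hF := sum_hasDerivAt N s τc j
  have hG := sum_hasDerivAt N s τr j
  have hG0 : (∑ i, τr i * Real.exp (Real.tanh (Function.update s j (s j) i))) ≠ 0 := by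
    simpa [Function.update_eq_self] using hGpos.ne'
  have hdiv := hF.fun_div hG hG0
  simp only [Function.update_eq_self] at hdiv
  refine hdiv.congr_deriv (Eq.symm ?_)
  have hG2 : (∑ i, τr i * Real.exp (Real.tanh (s i))) ^ 2 ≠ 0 :=
    pow_ne_zero _ hGpos.ne'
  field_simp
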